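/- Example 3, equation (8₃) (continuum of mixed solutions): For every C ≥ 0, the function φ_C : ℝ → ℝ defined by φ_C(x) = 2x² for x ≤ C and φ_C(x) = 3(x − C/3)² + 2C²/3 for x ≥ C satisfies: φ_C(0) = 0; φ_C(x) ≥ 2x² for all x ∈ ℝ (so its graph lies in G̃); φ_C is differentiable on ℝ; and for every x ∈ ℝ the derivative of φ_C at x equals 2·√(φ_C(x) − 2x²) + 4x. Hence the boundary Cauchy problem at the origin has a continuum of solutions, one for each C ≥ 0. -/

import Mathlib

open Set Filter

lemma aux_sq_max (C : ℝ) : HasDerivAt (fun x : ℝ => (max (x - C) 0) ^ 2) 0 C := by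
  rw [hasDerivAt_iff_tendsto]
  have h0 : Tendsto (fun x : ℝ => |x - C|) (nhds C) (nhds 0) := by
    have hc : Continuous fun x : ℝ => |x - C| := by continuity
    simpa using hc.tendsto C
  refine squeeze_zero (fun x => mul_nonneg (inv_nonneg.mpr (norm_nonneg _)) (norm_nonneg _)) (fun x => ?_) h0
  rcases eq_or_ne x C with rfl | hx
  · simp
  · have hxc : |x - C| ≠ 0 := by
      simpa [sub_eq_zero] using hx
    have h1 : ‖(max (x - C) 0) ^ 2 - (max (C - C) 0) ^ 2‖ ≤ |x - C| ^ 2 := by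
      have hz : (max (C - C) 0) ^ 2 = (0:ℝ) := by simp
      rw [hz, sub_zero, Real.norm_eq_abs, abs_of_nonneg (by positivity)]
      have hm : (max (x - C) 0) ^ 2 ≤ (x - C) ^ 2 := by
        rcases le_total (x - C) 0 with h | h
        · rw [max_eq_right h]; simpa using sq_nonneg (x - C)
        · rw [max_eq_left h]
      calc (max (x - C) 0) ^ 2 ≤ (x - C) ^ 2 := hm
        _ = |x - C| ^ 2 := (sq_abs _).symm
    calc ‖x - C‖⁻¹ * ‖(max (x - C) 0) ^ 2 - (max (C - C) 0) ^ 2 - (x - C) • (0:ℝ)‖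
        = |x - C|⁻¹ * ‖(max (x - C) 0) ^ 2 - (max (C - C) 0) ^ 2‖ := by
          simp [Real.norm_eq_abs]
      _ ≤ |x - C|⁻¹ * |x - C| ^ 2 := by gcongr
      _ = |x - C| := by
          field_simp

/-- Example 3, equation (8₃): for every `C ≥ 0` the function
`φ_C(x) = 2x²` (x ≤ C), `φ_C(x) = 3(x − C/3)² + 2C²/3` (x ≥ C) is a
solution of `y' = 2√(y − 2x²) + 4x` through the origin on all of `ℝ`. -/
theorem example3_eq3_continuum_of_solutions :
    ∀ C : ℝ, 0 ≤ C → ∀ φ : ℝ → ℝ,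
      (∀ x : ℝ, φ x = if x ≤ C then 2 * x ^ 2
        else 3 * (x - C / 3) ^ 2 + 2 * C ^ 2 / 3) →
      φ 0 = 0 ∧
      (∀ x : ℝ, 2 * x ^ 2 ≤ φ x) ∧
      (∀ x : ℝ, HasDerivAt φ (2 * Real.sqrt (φ x - 2 * x ^ 2) + 4 * x) x) := by
  intro C hC φ hφ
  have key : ∀ x : ℝ, φ x = 2 * x ^ 2 + (max (x - C) 0) ^ 2 := by
    intro x
    rw [hφ x]
    rcases le_or_gt x C with h | h
    · simp [if_pos h, max_eq_right (by linarith : x - C ≤ 0)]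
    · rw [if_neg (not_le.mpr h), max_eq_left (by linarith : (0:ℝ) ≤ x - C)]
      ring
  refine ⟨by simp [hφ 0, hC], fun x => ?_, fun x => ?_⟩
  · have h0 : (0:ℝ) ≤ (max (x - C) 0) ^ 2 := by positivity
    rw [key x]; linarith
  · have hsub : φ x - 2 * x ^ 2 = (max (x - C) 0) ^ 2 := by rw [key x]; ring
    rcases lt_trichotomy x C with h | h | h
    · -- x < C : φ = 2x² near x
      have hev : φ =ᶠ[nhds x] fun y => 2 * y ^ 2 := by
        filter_upwards [Iio_mem_nhds h] with y hy
        rw [hφ y, if_pos (le_of_lt (mem_Iio.mp hy))]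
      have hd : HasDerivAt (fun y : ℝ => 2 * y ^ 2) (4 * x) x := by
        have := (hasDerivAt_pow 2 x).const_mul (2 : ℝ)
        refine this.congr_deriv ?_
        push_cast; ring
      have hval : Real.sqrt (φ x - 2 * x ^ 2) = 0 := by
        rw [hsub, max_eq_right (by linarith : x - C ≤ 0)]
        simp
      rw [hval]
      simpa using hd.congr_of_eventuallyEq hev
    · -- x = C
      subst h
      have hd : HasDerivAt φ (4 * x) x := by
        have h1 : HasDerivAt (fun y : ℝ => 2 * y ^ 2) (4 * x) x := by
          have := (hasDerivAt_pow 2 x).const_mul (2 : ℝ)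
          refine this.congr_deriv ?_
          push_cast; ring
        have h2 := h1.add (aux_sq_max x)
        have : HasDerivAt (fun y : ℝ => 2 * y ^ 2 + (max (y - x) 0) ^ 2) (4 * x) x := by
          exact h2.congr_deriv (add_zero _)
        exact this.congr_of_eventuallyEq (Eventually.of_forall fun y => key y)
      have hval : Real.sqrt (φ x - 2 * x ^ 2) = 0 := by
        rw [hsub]; simp
      rw [hval]
      simpa using hd
    · -- x > C
      have hev : φ =ᶠ[nhds x] fun y => 3 * (y - C / 3) ^ 2 + 2 * C ^ 2 / 3 := by
        filter_upwards [Ioi_mem_nhds h] with y hy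
        rw [hφ y, if_neg (not_le.mpr (mem_Ioi.mp hy))]
      have hd : HasDerivAt (fun y : ℝ => 3 * (y - C / 3) ^ 2 + 2 * C ^ 2 / 3)
          (6 * x - 2 * C) x := by
        have h1 : HasDerivAt (fun y : ℝ => y - C / 3) 1 x :=
          (hasDerivAt_id x).sub_const _
        have h2 := (h1.pow 2).const_mul (3 : ℝ)
        have h3 := h2.add_const (2 * C ^ 2 / 3)
        refine h3.congr_deriv ?_
        push_cast; ring
      have hval : Real.sqrt (φ x - 2 * x ^ 2) = x - C := by
        rw [hsub, max_eq_left (by linarith : (0:ℝ) ≤ x - C)]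
        exact Real.sqrt_sq (by linarith)
      rw [hval]
      have : 2 * (x - C) + 4 * x = 6 * x - 2 * C := by ring
      rw [this]
      exact hd.congr_of_eventuallyEq hev
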